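/- Let b : ℝⁿ → ℝ be a one-hidden-layer ReLU network, let h : ℝⁿ → ℝ be any function, and define D := {x : b(x) ≥ 0}. Suppose that for every activation set S ⊆ {1,…,M} and every x ∈ X̄(S) with b(x) = 0 one has h(x) ≥ 0. Then the frontier of D is contained in {x : h(x) ≥ 0}. -/
import Mathlib


open scoped RealInnerProductSpace

/-- A one-hidden-layer ReLU network with input weights `W`, biases `r`,
output weights `Ω` and output bias `ψ`. -/
noncomputable def reluNet {n M : ℕ} (W : Fin M → EuclideanSpace ℝ (Fin n))
    (r Ω : Fin M → ℝ) (ψ : ℝ) (x : EuclideanSpace ℝ (Fin n)) : ℝ :=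
  ψ + ∑ j, Ω j * max 0 (⟪W j, x⟫ + r j)

/-- The activation region `X̄(S)` of a one-hidden-layer ReLU network. -/
def actRegion {n M : ℕ} (W : Fin M → EuclideanSpace ℝ (Fin n)) (r : Fin M → ℝ)
    (S : Set (Fin M)) : Set (EuclideanSpace ℝ (Fin n)) :=
  {x | (∀ j ∈ S, 0 ≤ ⟪W j, x⟫ + r j) ∧ (∀ j ∉ S, ⟪W j, x⟫ + r j ≤ 0)}

lemma reluNet_continuous {n M : ℕ} (W : Fin M → EuclideanSpace ℝ (Fin n))
    (r Ω : Fin M → ℝ) (ψ : ℝ) : Continuous (reluNet W r Ω ψ) := by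
  unfold reluNet
  refine continuous_const.add (continuous_finset_sum _ fun j _ => ?_)
  exact continuous_const.mul (continuous_const.max
    ((continuous_const.inner continuous_id).add continuous_const))

/-- Soundness of the correctness verifier: if on every activation region the
function `h` is nonnegative at every zero of the ReLU network `b`, then the
frontier of `D = {x : b(x) ≥ 0}` lies in the safe set `{x : h(x) ≥ 0}`. -/
theorem correctness_verifier_sound {n M : ℕ}
    (W : Fin M → EuclideanSpace ℝ (Fin n)) (r Ω : Fin M → ℝ) (ψ : ℝ)
    (h : EuclideanSpace ℝ (Fin n) → ℝ)
    (hver : ∀ S : Set (Fin M), ∀ x ∈ actRegion W r S,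
      reluNet W r Ω ψ x = 0 → 0 ≤ h x) :
    frontier {x | 0 ≤ reluNet W r Ω ψ x} ⊆ {x | 0 ≤ h x} := by
  intro x hx
  have hb := reluNet_continuous W r Ω ψ
  have hclosed : IsClosed {x | 0 ≤ reluNet W r Ω ψ x} :=
    isClosed_le continuous_const hb
  have hge : 0 ≤ reluNet W r Ω ψ x := by
    have := frontier_subset_closure (s := {x | 0 ≤ reluNet W r Ω ψ x}) hx
    rwa [hclosed.closure_eq] at this
  have hle : reluNet W r Ω ψ x ≤ 0 := by
    have hx' := hx
    rw [frontier_eq_closure_inter_closure] at hx'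
    have h2 : x ∈ closure {x | 0 ≤ reluNet W r Ω ψ x}ᶜ := hx'.2
    have : x ∈ closure {x | reluNet W r Ω ψ x ≤ 0} := by
      refine closure_mono ?_ h2
      intro y hy
      simp only [Set.mem_compl_iff, Set.mem_setOf_eq, not_le] at hy ⊢
      exact hy.le
    have hcl : IsClosed {x | reluNet W r Ω ψ x ≤ 0} := isClosed_le hb continuous_const
    rwa [hcl.closure_eq] at this
  have hzero : reluNet W r Ω ψ x = 0 := le_antisymm hle hge
  exact hver {j | 0 ≤ ⟪W j, x⟫ + r j} x ⟨fun j hj => hj, fun j hj => le_of_not_ge hj⟩ hzero
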